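/- arXiv:2303.03100 — 2 statements merged into one kernel-verified Lean document; each statement's English description precedes it below -/
import Mathlib

section
/- If a sequence of nonnegative reals satisfies q_{k+1} ≤ (1+α_k) q_k + α_k·c for nonnegative stepsizes α_k with Σ_{j=k_1}^{k_2-1} α_j ≤ 1/4, then for all k in [k_1, k_2], q_k + c ≤ (1 + 2·Σ_{j=k_1}^{k-1} α_j)(q_{k_1} + c), using that 1+x ≤ e^x ≤ 1+2x for x ∈ [0,1/2]. -/
theorem seq_growth_bound (c : ℝ) (hc : 0 ≤ c) (q α : ℕ → ℝ)
    (hq : ∀ k, 0 ≤ q k) (hα : ∀ k, 0 ≤ α k) (k₁ k₂ : ℕ)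
    (hrec : ∀ k, k₁ ≤ k → k < k₂ → q (k + 1) ≤ (1 + α k) * q k + α k * c)
    (hsum : ∑ j ∈ Finset.Ico k₁ k₂, α j ≤ 1 / 4) :
    ∀ k, k₁ ≤ k → k ≤ k₂ →
      q k + c ≤ (1 + 2 * ∑ j ∈ Finset.Ico k₁ k, α j) * (q k₁ + c) := by
  intro k
  induction k with
  | zero =>
    intro h1 _
    interval_cases k₁
    simp
  | succ n ih =>
    intro h1 h2
    rcases Nat.lt_or_ge n k₁ with hlt | hge
    · have : k₁ = n + 1 := le_antisymm h1 hlt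
      subst this
      simp
    · have hn2 : n < k₂ := h2
      have ihn := ih hge (le_of_lt hn2)
      have hS : ∑ j ∈ Finset.Ico k₁ n, α j ≤ 1 / 4 := by
        refine le_trans (Finset.sum_le_sum_of_subset_of_nonneg ?_ ?_) hsum
        · exact Finset.Ico_subset_Ico le_rfl (le_of_lt hn2)
        · intro i _ _; exact hα i
      have hS0 : 0 ≤ ∑ j ∈ Finset.Ico k₁ n, α j :=
        Finset.sum_nonneg fun i _ => hα i
      have hsplit : ∑ j ∈ Finset.Ico k₁ (n + 1), α j
          = (∑ j ∈ Finset.Ico k₁ n, α j) + α n :=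
        Finset.sum_Ico_succ_top hge α
      have hrecn := hrec n hge hn2
      rw [hsplit]
      have hQ : 0 ≤ q k₁ + c := add_nonneg (hq k₁) hc
      have han := hα n
      nlinarith [hq n, mul_nonneg han hS0, mul_nonneg (mul_nonneg han hS0) hQ]
end

section
/- For matrices X_i ∈ R^{m×n}, X_{-i} ∈ R^{n×m} and probability vectors μ^i ∈ Δ^m, μ^{-i} ∈ Δ^n, the function V_X(μ^i,μ^{-i}) = Σ_{i} max_{μ̂^i}{(μ̂^i − μ^i)ᵀ X_i μ^{-i} + τν(μ̂^i) − τν(μ^i)} satisfies ‖σ_τ(X_i μ^{-i}) − μ^i‖_2² + ‖σ_τ(X_{-i} μ^i) − μ^{-i}‖_2² ≤ (2/τ) V_X(μ^i, μ^{-i}). -/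
/-- Entropy of a distribution. -/
noncomputable def entropyFn {n : Type*} [Fintype n] (μ : n → ℝ) : ℝ :=
  -∑ a, μ a * Real.log (μ a)

/-- Softmax with temperature `τ`. -/
noncomputable def softmaxτ {n : Type*} [Fintype n] (τ : ℝ) (x : n → ℝ) : n → ℝ :=
  fun a => Real.exp (x a / τ) / ∑ b, Real.exp (x b / τ)


lemma logIneqA {t : ℝ} (ht : 0 < t) (ht1 : t ≤ 1) :
    Real.log t ≤ (t - 1) - (t - 1)^2 / 2 := by
  set F : ℝ → ℝ := fun s => (s - 1) - (s - 1)^2 / 2 - Real.log s with hF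
  have hderiv : ∀ x ∈ Set.Ioi (0:ℝ), HasDerivAt F (1 - (x-1) - 1/x) x := by
    intro x hx
    have h1 : HasDerivAt (fun s : ℝ => s - 1) 1 x := (hasDerivAt_id x).sub_const 1
    have h2 : HasDerivAt (fun s : ℝ => (s - 1)^2 / 2) ((2 * (x-1)^1 * 1)/2) x :=
      (h1.pow 2).div_const 2
    have h3 : HasDerivAt Real.log (1/x) x := by
      simpa [one_div] using Real.hasDerivAt_log (ne_of_gt hx)
    have := (h1.sub h2).sub h3
    exact this.congr_deriv (by ring)
  have hanti : AntitoneOn F (Set.Ioi 0) := by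
    apply antitoneOn_of_deriv_nonpos (convex_Ioi 0)
    · intro x hx
      exact ((hderiv x hx).continuousAt).continuousWithinAt
    · intro x hx
      rw [interior_Ioi] at hx
      exact (hderiv x hx).differentiableAt.differentiableWithinAt
    · intro x hx
      rw [interior_Ioi] at hx
      rw [(hderiv x hx).deriv]
      have hx' : (0:ℝ) < x := hx
      have heq : 1 - (x-1) - 1/x = -((x-1)^2 / x) := by field_simp; ring
      rw [heq, neg_nonpos]
      positivity
  have h10 : F 1 ≤ F t := hanti ht (by norm_num) ht1
  simp only [hF, Real.log_one] at h10
  nlinarith [h10]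

lemma logIneqB {t : ℝ} (ht : 0 < t) (ht1 : t ≤ 1) :
    (t^2 - 1) / (2*t) ≤ Real.log t := by
  set F : ℝ → ℝ := fun s => 2 * s * Real.log s - s^2 + 1 with hF
  have hderiv : ∀ x ∈ Set.Ioi (0:ℝ), HasDerivAt F (2 * Real.log x + 2 - 2*x) x := by
    intro x hx
    have h3 : HasDerivAt Real.log (1/x) x := by
      simpa [one_div] using Real.hasDerivAt_log (ne_of_gt hx)
    have h1 : HasDerivAt (fun s : ℝ => 2 * s) 2 x := by
      simpa using (hasDerivAt_id x).const_mul 2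
    have h2 : HasDerivAt (fun s : ℝ => 2 * s * Real.log s)
        (2 * Real.log x + 2 * x * (1/x)) x := h1.mul h3
    have h4 : HasDerivAt (fun s : ℝ => s^2) (2*x) x := by
      simpa using hasDerivAt_pow 2 x
    have := (h2.sub h4).add_const 1
    have hx0 : x ≠ 0 := ne_of_gt hx
    exact this.congr_deriv (by field_simp)
  have hanti : AntitoneOn F (Set.Ioi 0) := by
    apply antitoneOn_of_deriv_nonpos (convex_Ioi 0)
    · intro x hx
      exact ((hderiv x hx).continuousAt).continuousWithinAt
    · intro x hx
      rw [interior_Ioi] at hx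
      exact (hderiv x hx).differentiableAt.differentiableWithinAt
    · intro x hx
      rw [interior_Ioi] at hx
      rw [(hderiv x hx).deriv]
      have hx' : (0:ℝ) < x := hx
      have := Real.log_le_sub_one_of_pos hx'
      linarith
  have h10 : F 1 ≤ F t := hanti ht (by norm_num) ht1
  simp only [hF, Real.log_one] at h10
  rw [div_le_iff₀ (by positivity)]
  nlinarith [h10]

lemma perTerm {x y : ℝ} (hx0 : 0 ≤ x) (hx1 : x ≤ 1) (hy0 : 0 < y) (hy1 : y ≤ 1) :
    (x - y) + (x - y)^2 / 2 ≤ x * Real.log x - x * Real.log y := by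
  rcases eq_or_lt_of_le hx0 with h0 | hx0'
  · simp only [← h0, Real.log_zero, mul_zero, zero_mul, zero_sub, sub_zero]
    nlinarith
  rcases le_or_gt y x with hxy | hxy
  · -- x ≥ y, use A with t = y/x
    have ht : 0 < y / x := by positivity
    have ht1 : y / x ≤ 1 := (div_le_one hx0').mpr hxy
    have hA := logIneqA ht ht1
    rw [Real.log_div (ne_of_gt hy0) (ne_of_gt hx0')] at hA
    have hx2 : (0:ℝ) < x^2 := by positivity
    have key : x * Real.log y - x * Real.log x ≤ (y - x) - (y-x)^2/(2*x) := by
      have := mul_le_mul_of_nonneg_left hA (le_of_lt hx0')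
      calc x * Real.log y - x * Real.log x = x * (Real.log y - Real.log x) := by ring
        _ ≤ x * ((y/x - 1) - (y/x - 1)^2 / 2) := this
        _ = (y - x) - (y-x)^2/(2*x) := by field_simp
    have h2 : (y-x)^2/(2*x) ≥ (y-x)^2/2 := by
      apply div_le_div_of_nonneg_left (by positivity) (by positivity)
      linarith
    nlinarith [key, h2]
  · -- x < y, use B with t = x/y
    have ht : 0 < x / y := by positivity
    have ht1 : x / y ≤ 1 := (div_le_one hy0).mpr (le_of_lt hxy)
    have hB := logIneqB ht ht1
    rw [Real.log_div (ne_of_gt hx0') (ne_of_gt hy0)] at hB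
    have key : (x^2 - y^2)/(2*y) ≤ x * (Real.log x - Real.log y) := by
      have h := mul_le_mul_of_nonneg_left hB (le_of_lt hx0')
      calc (x^2-y^2)/(2*y) = x * (((x/y)^2 - 1)/(2*(x/y))) := by
            field_simp
        _ ≤ x * (Real.log x - Real.log y) := h
    have h2 : (x - y) + (x - y)^2/2 ≤ (x^2 - y^2)/(2*y) := by
      rw [le_div_iff₀ (by positivity)]
      nlinarith [mul_nonneg (sq_nonneg (x-y)) (by linarith : (0:ℝ) ≤ 1 - y)]
    nlinarith [key, h2]

lemma oneSided {k : Type*} [Fintype k] [Nonempty k] {τ : ℝ} (hτ : 0 < τ)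
    (c : k → ℝ) {μ : k → ℝ} (hμ : μ ∈ stdSimplex ℝ k) :
    (τ/2) * ∑ a, (softmaxτ τ c a - μ a)^2 ≤
      ⨆ ν : stdSimplex ℝ k, ((∑ a, ((ν : k → ℝ) a - μ a) * c a) +
        τ * entropyFn (ν : k → ℝ) - τ * entropyFn μ) := by
  obtain ⟨hμ0, hμsum⟩ := hμ
  have hμ1 : ∀ a, μ a ≤ 1 := by
    intro a
    rw [← hμsum]
    exact Finset.single_le_sum (fun b _ => hμ0 b) (Finset.mem_univ a)
  set Z : ℝ := ∑ b, Real.exp (c b / τ) with hZdef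
  have hZ : 0 < Z := Finset.sum_pos (fun b _ => Real.exp_pos _) Finset.univ_nonempty
  set p : k → ℝ := softmaxτ τ c with hpdef
  have hp_pos : ∀ a, 0 < p a := fun a => div_pos (Real.exp_pos _) hZ
  have hp_sum : ∑ a, p a = 1 := by
    simp only [hpdef, softmaxτ, ← Finset.sum_div, ← hZdef]
    exact div_self (ne_of_gt hZ)
  have hp_mem : p ∈ stdSimplex ℝ k := ⟨fun a => (hp_pos a).le, hp_sum⟩
  have hp_le1 : ∀ a, p a ≤ 1 := by
    intro a
    rw [← hp_sum]
    exact Finset.single_le_sum (fun b _ => (hp_pos b).le) (Finset.mem_univ a)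
  have hlog : ∀ a, c a = τ * (Real.log (p a) + Real.log Z) := by
    intro a
    have : Real.log (p a) = c a / τ - Real.log Z := by
      rw [hpdef]
      show Real.log (Real.exp (c a / τ) / Z) = _
      rw [Real.log_div (Real.exp_ne_zero _) (ne_of_gt hZ), Real.log_exp]
    rw [this]
    field_simp
    ring
  have e1 : ∑ a, (p a - μ a) * c a = τ * ∑ a, (p a - μ a) * Real.log (p a) := by
    have step : ∀ a, (p a - μ a) * c a =
        τ * ((p a - μ a) * Real.log (p a)) + (τ * Real.log Z) * (p a - μ a) := by
      intro a; rw [hlog a]; ring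
    rw [Finset.sum_congr rfl (fun a _ => step a), Finset.sum_add_distrib,
      ← Finset.mul_sum, ← Finset.mul_sum, Finset.sum_sub_distrib, hp_sum, hμsum]
    ring
  have hfinal : (τ/2) * ∑ a, (p a - μ a)^2 ≤
      (∑ a, (p a - μ a) * c a) + τ * entropyFn p - τ * entropyFn μ := by
    rw [e1]
    unfold entropyFn
    have e2 : τ * (∑ a, (p a - μ a) * Real.log (p a)) + τ * -(∑ a, p a * Real.log (p a))
        - τ * -(∑ a, μ a * Real.log (μ a))
        = τ * ∑ a, (μ a * Real.log (μ a) - μ a * Real.log (p a)) := by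
      rw [show ∀ A B C : ℝ, τ * A + τ * -B - τ * -C = τ * (A - B + C) from fun A B C => by ring]
      congr 1
      rw [← Finset.sum_sub_distrib, ← Finset.sum_add_distrib]
      exact Finset.sum_congr rfl (fun a _ => by ring)
    rw [e2]
    have hbound : ∑ a, ((μ a - p a) + (μ a - p a)^2/2)
        ≤ ∑ a, (μ a * Real.log (μ a) - μ a * Real.log (p a)) :=
      Finset.sum_le_sum (fun a _ => perTerm (hμ0 a) (hμ1 a) (hp_pos a) (hp_le1 a))
    have hzero : ∑ a, ((μ a - p a) + (μ a - p a)^2/2) = (1/2) * ∑ a, (p a - μ a)^2 := by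
      rw [Finset.sum_add_distrib, Finset.sum_sub_distrib, hp_sum, hμsum, Finset.mul_sum]
      rw [sub_self, zero_add]
      exact Finset.sum_congr rfl (fun a _ => by ring)
    calc (τ/2) * ∑ a, (p a - μ a)^2
        = τ * ((1/2) * ∑ a, (p a - μ a)^2) := by ring
      _ = τ * ∑ a, ((μ a - p a) + (μ a - p a)^2/2) := by rw [hzero]
      _ ≤ τ * ∑ a, (μ a * Real.log (μ a) - μ a * Real.log (p a)) :=
          mul_le_mul_of_nonneg_left hbound hτ.le
  -- sup part
  have : CompactSpace (stdSimplex ℝ k) := isCompact_iff_compactSpace.mp ((isCompact_stdSimplex ℝ k))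
  have hcont : Continuous fun ν : stdSimplex ℝ k =>
      ((∑ a, ((ν : k → ℝ) a - μ a) * c a) + τ * entropyFn (ν : k → ℝ) - τ * entropyFn μ) := by
    have hent : Continuous fun ν : stdSimplex ℝ k => entropyFn (ν : k → ℝ) := by
      unfold entropyFn
      exact (continuous_finset_sum _ (fun a _ =>
        Real.continuous_mul_log.comp ((continuous_apply a).comp continuous_subtype_val))).neg
    refine ((continuous_finset_sum _ (fun a _ => ?_)).add (continuous_const.mul hent)).sub continuous_const
    exact (((continuous_apply a).comp continuous_subtype_val).sub continuous_const).mul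
      continuous_const
  have hbdd : BddAbove (Set.range fun ν : stdSimplex ℝ k =>
      ((∑ a, ((ν : k → ℝ) a - μ a) * c a) + τ * entropyFn (ν : k → ℝ) - τ * entropyFn μ)) :=
    (isCompact_range hcont).bddAbove
  exact hfinal.trans (le_ciSup hbdd ⟨p, hp_mem⟩)

theorem lyapunov_quadratic_growth {m n : Type*} [Fintype m] [Fintype n]
    [Nonempty m] [Nonempty n] (τ : ℝ) (hτ : 0 < τ)
    (Xi : m → n → ℝ) (Xmi : n → m → ℝ)
    (μi : m → ℝ) (μmi : n → ℝ)
    (hμi : μi ∈ stdSimplex ℝ m) (hμmi : μmi ∈ stdSimplex ℝ n) :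
    (∑ a, (softmaxτ τ (fun a => ∑ b, Xi a b * μmi b) a - μi a) ^ 2) +
      (∑ b, (softmaxτ τ (fun b => ∑ a, Xmi b a * μi a) b - μmi b) ^ 2) ≤
    (2 / τ) *
      ((⨆ ν : stdSimplex ℝ m,
          ((∑ a, ((ν : m → ℝ) a - μi a) * ∑ b, Xi a b * μmi b) +
            τ * entropyFn (ν : m → ℝ) - τ * entropyFn μi)) +
        (⨆ ν : stdSimplex ℝ n,
          ((∑ b, ((ν : n → ℝ) b - μmi b) * ∑ a, Xmi b a * μi a) +
            τ * entropyFn (ν : n → ℝ) - τ * entropyFn μmi))) := by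
  have h1 := oneSided hτ (fun a => ∑ b, Xi a b * μmi b) hμi
  have h2 := oneSided hτ (fun b => ∑ a, Xmi b a * μi a) hμmi
  set A := ∑ a, (softmaxτ τ (fun a => ∑ b, Xi a b * μmi b) a - μi a) ^ 2
  set B := ∑ b, (softmaxτ τ (fun b => ∑ a, Xmi b a * μi a) b - μmi b) ^ 2
  set S1 := ⨆ ν : stdSimplex ℝ m,
      ((∑ a, ((ν : m → ℝ) a - μi a) * ∑ b, Xi a b * μmi b) +
        τ * entropyFn (ν : m → ℝ) - τ * entropyFn μi)
  set S2 := ⨆ ν : stdSimplex ℝ n,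
      ((∑ b, ((ν : n → ℝ) b - μmi b) * ∑ a, Xmi b a * μi a) +
        τ * entropyFn (ν : n → ℝ) - τ * entropyFn μmi)
  have hτ' : τ ≠ 0 := ne_of_gt hτ
  calc A + B = (2/τ) * ((τ/2) * A + (τ/2) * B) := by field_simp
    _ ≤ (2/τ) * (S1 + S2) :=
        mul_le_mul_of_nonneg_left (add_le_add h1 h2) (by positivity)
end
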